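/- arXiv:2312.10830 — 2 statements merged into one kernel-verified Lean document; each statement's English description precedes it below -/
import Mathlib

section
/- Let C be a hereditary class of graphs and let G be a graph. Then the following are equivalent: (a) G belongs to G_C; (b) for every induced subgraph H of G, every minimal separator S of H satisfies H[S] ∈ C; (c) for every induced subgraph H of G, every minimal cutset K of H satisfies H[K] ∈ C. -/
open SimpleGraph

namespace PaperSep

variable {V : Type} {W : Type}

/-- There is a walk from `a` to `b` in `G` all of whose vertices avoid the set `S`. -/
def ConnAvoid (G : SimpleGraph V) (S : Set V) (a b : V) : Prop :=
  ∃ p : G.Walk a b, ∀ v ∈ p.support, v ∉ S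

/-- `S` is an `(a,b)`-separator of `G`. -/
def IsSep (G : SimpleGraph V) (a b : V) (S : Set V) : Prop :=
  a ∉ S ∧ b ∉ S ∧ ¬ ConnAvoid G S a b

/-- `S` is a minimal `(a,b)`-separator of `G`. -/
def IsMinSep (G : SimpleGraph V) (a b : V) (S : Set V) : Prop :=
  IsSep G a b S ∧ ∀ T ⊂ S, ¬ IsSep G a b T

/-- `S` is a minimal separator of `G`. -/
def IsMinimalSeparator (G : SimpleGraph V) (S : Set V) : Prop :=
  ∃ a b : V, a ≠ b ∧ ¬ G.Adj a b ∧ IsMinSep G a b S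

/-- `K` is a cutset of `G`, i.e. `G − K` is disconnected. -/
def IsCutset (G : SimpleGraph V) (K : Set V) : Prop :=
  ∃ a b : V, a ∉ K ∧ b ∉ K ∧ ¬ ConnAvoid G K a b

/-- `K` is a minimal cutset of `G`. -/
def IsMinimalCutset (G : SimpleGraph V) (K : Set V) : Prop :=
  IsCutset G K ∧ ∀ T ⊂ K, ¬ IsCutset G T

/-- A class of finite graphs. -/
def GraphClass : Type 1 :=
  ∀ (α : Type) [Finite α], SimpleGraph α → Prop

/-- A class is hereditary if it is closed under isomorphism and induced subgraphs. -/
def Hereditary (C : GraphClass) : Prop :=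
  ∀ (α : Type) [Finite α] (G : SimpleGraph α) (β : Type) [Finite β] (H : SimpleGraph β)
    (s : Set α), Nonempty (H ≃g G.induce s) → C α G → C β H

/-- `G ∈ 𝒢_C` : every minimal separator of `G` induces a graph in `C`. -/
def MemGC (C : GraphClass) {α : Type} [Finite α] (G : SimpleGraph α) : Prop :=
  ∀ S : Set α, IsMinimalSeparator G S → C ↥S (G.induce S)

/-- The class `𝒢_C`. -/
def GCclass (C : GraphClass) : GraphClass :=
  fun α inst G => @MemGC C α inst G

/-- `S` is a union of `k` (possibly empty) cliques of `G`. -/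
def UnionOfCliques (G : SimpleGraph V) (k : ℕ) (S : Set V) : Prop :=
  ∃ f : Fin k → Set V, (∀ i, G.IsClique (f i)) ∧ S = ⋃ i, f i

/-- `G ∈ 𝒢_k` : every minimal separator of `G` is a union of `k` cliques. -/
def MemGk (k : ℕ) (G : SimpleGraph V) : Prop :=
  ∀ S : Set V, IsMinimalSeparator G S → UnionOfCliques G k S

/-- The class `𝒢_k`. -/
def Gkclass (k : ℕ) : GraphClass := fun _ _ G => MemGk k G

/-- The class `𝒞_k` of graphs whose vertex set is a union of `k` cliques. -/
def Ckclass (k : ℕ) : GraphClass := fun _ _ G => UnionOfCliques G k Set.univ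

/-- An induced minor model of `H` in `G`. -/
def IsIMModel (G : SimpleGraph V) (H : SimpleGraph W) (X : W → Set V) : Prop :=
  (∀ w, (X w).Nonempty) ∧
  (∀ u w : W, u ≠ w → Disjoint (X u) (X w)) ∧
  (∀ w, (G.induce (X w)).Connected) ∧
  (∀ u w : W, u ≠ w → (H.Adj u w ↔ ∃ a ∈ X u, ∃ b ∈ X w, G.Adj a b))

/-- `H` is an induced minor of `G`. -/
def IsInducedMinor (H : SimpleGraph W) (G : SimpleGraph V) : Prop :=
  ∃ X : W → Set V, IsIMModel G H X

/-- The class `C` is closed under induced minors. -/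
def IMClosed (C : GraphClass) : Prop :=
  ∀ (α : Type) [Finite α] (G : SimpleGraph α) (β : Type) [Finite β] (H : SimpleGraph β),
    C α G → IsInducedMinor H G → C β H

/-- The class `C` is closed under the addition of edges. -/
def EdgeAddClosed (C : GraphClass) : Prop :=
  ∀ (α : Type) [Finite α] (G : SimpleGraph α) (a b : α), a ≠ b → ¬ G.Adj a b →
    C α G → C α (G ⊔ SimpleGraph.edge a b)

/-- `G ∈ ℳ_C` : `G ∉ C` but every proper induced minor of `G` is in `C`.
(For finite graphs, the proper induced minors of `G` are exactly the induced minors of `G`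
not isomorphic to `G`.) -/
def MemMC (C : GraphClass) {α : Type} [Finite α] (G : SimpleGraph α) : Prop :=
  ¬ C α G ∧
  ∀ (β : Type) [Finite β] (H : SimpleGraph β),
    IsInducedMinor H G → IsEmpty (H ≃g G) → C β H

/-- The complete join of two graphs. -/
def join (G : SimpleGraph V) (H : SimpleGraph W) : SimpleGraph (V ⊕ W) :=
  SimpleGraph.fromRel (fun x y =>
    match x, y with
    | Sum.inl a, Sum.inl b => G.Adj a b
    | Sum.inr a, Sum.inr b => H.Adj a b
    | _, _ => True)

/-- The class `C` is closed under the addition of universal vertices (up to isomorphism). -/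
def UnivAddClosed (C : GraphClass) : Prop :=
  ∀ (α : Type) [Finite α] (G : SimpleGraph α) (β : Type) [Finite β] (H : SimpleGraph β),
    C α G → Nonempty (H ≃g join (⊥ : SimpleGraph (Fin 1)) G) → C β H

/-- `G` has a universal vertex. -/
def HasUniversalVertex (G : SimpleGraph V) : Prop :=
  ∃ v : V, ∀ w : V, w ≠ v → G.Adj v w



/-- `G` is a theta: two nonadjacent vertices joined by three internally disjoint induced
paths of length at least two, with no other vertices or edges
(equivalently, a subdivision of `K_{2,3}`). -/
def IsTheta (G : SimpleGraph V) : Prop :=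
  ∃ (a b : V) (P₁ P₂ P₃ : G.Walk a b),
    a ≠ b ∧
    P₁.IsPath ∧ P₂.IsPath ∧ P₃.IsPath ∧
    2 ≤ P₁.length ∧ 2 ≤ P₂.length ∧ 2 ≤ P₃.length ∧
    (∀ v : V, v ∈ P₁.support → v ∈ P₂.support → v = a ∨ v = b) ∧
    (∀ v : V, v ∈ P₁.support → v ∈ P₃.support → v = a ∨ v = b) ∧
    (∀ v : V, v ∈ P₂.support → v ∈ P₃.support → v = a ∨ v = b) ∧
    (∀ v : V, v ∈ P₁.support ∨ v ∈ P₂.support ∨ v ∈ P₃.support) ∧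
    (∀ u v : V, G.Adj u v ↔
      s(u, v) ∈ P₁.edges ∨ s(u, v) ∈ P₂.edges ∨ s(u, v) ∈ P₃.edges)

/-- `G` is a pyramid: an apex `a` joined to a triangle `b₁b₂b₃` by three paths sharing only
`a`, at least two of which have length at least two, with no other vertices or edges. -/
def IsPyramid (G : SimpleGraph V) : Prop :=
  ∃ (a b₁ b₂ b₃ : V) (P₁ : G.Walk a b₁) (P₂ : G.Walk a b₂) (P₃ : G.Walk a b₃),
    G.Adj b₁ b₂ ∧ G.Adj b₁ b₃ ∧ G.Adj b₂ b₃ ∧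
    P₁.IsPath ∧ P₂.IsPath ∧ P₃.IsPath ∧
    1 ≤ P₁.length ∧ 1 ≤ P₂.length ∧ 1 ≤ P₃.length ∧
    ((2 ≤ P₁.length ∧ 2 ≤ P₂.length) ∨ (2 ≤ P₁.length ∧ 2 ≤ P₃.length) ∨
      (2 ≤ P₂.length ∧ 2 ≤ P₃.length)) ∧
    (∀ v : V, v ∈ P₁.support → v ∈ P₂.support → v = a) ∧
    (∀ v : V, v ∈ P₁.support → v ∈ P₃.support → v = a) ∧
    (∀ v : V, v ∈ P₂.support → v ∈ P₃.support → v = a) ∧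
    (∀ v : V, v ∈ P₁.support ∨ v ∈ P₂.support ∨ v ∈ P₃.support) ∧
    (∀ u v : V, G.Adj u v ↔
      s(u, v) ∈ P₁.edges ∨ s(u, v) ∈ P₂.edges ∨ s(u, v) ∈ P₃.edges ∨
      s(u, v) = s(b₁, b₂) ∨ s(u, v) = s(b₁, b₃) ∨ s(u, v) = s(b₂, b₃))

/-- `G` is a prism: two disjoint triangles joined by three pairwise disjoint paths, with no
other vertices or edges. -/
def IsPrism (G : SimpleGraph V) : Prop :=
  ∃ (a₁ a₂ a₃ b₁ b₂ b₃ : V) (P₁ : G.Walk a₁ b₁) (P₂ : G.Walk a₂ b₂) (P₃ : G.Walk a₃ b₃),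
    G.Adj a₁ a₂ ∧ G.Adj a₁ a₃ ∧ G.Adj a₂ a₃ ∧
    G.Adj b₁ b₂ ∧ G.Adj b₁ b₃ ∧ G.Adj b₂ b₃ ∧
    P₁.IsPath ∧ P₂.IsPath ∧ P₃.IsPath ∧
    1 ≤ P₁.length ∧ 1 ≤ P₂.length ∧ 1 ≤ P₃.length ∧
    (∀ v : V, v ∈ P₁.support → v ∈ P₂.support → False) ∧
    (∀ v : V, v ∈ P₁.support → v ∈ P₃.support → False) ∧
    (∀ v : V, v ∈ P₂.support → v ∈ P₃.support → False) ∧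
    (∀ v : V, v ∈ P₁.support ∨ v ∈ P₂.support ∨ v ∈ P₃.support) ∧
    (∀ u v : V, G.Adj u v ↔
      s(u, v) ∈ P₁.edges ∨ s(u, v) ∈ P₂.edges ∨ s(u, v) ∈ P₃.edges ∨
      s(u, v) = s(a₁, a₂) ∨ s(u, v) = s(a₁, a₃) ∨ s(u, v) = s(a₂, a₃) ∨
      s(u, v) = s(b₁, b₂) ∨ s(u, v) = s(b₁, b₃) ∨ s(u, v) = s(b₂, b₃))

/-- `G` is a long prism: a prism other than the complement of `C₆`, i.e. a prism in which at
least one of the three paths has length at least two. -/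
def IsLongPrism (G : SimpleGraph V) : Prop :=
  ∃ (a₁ a₂ a₃ b₁ b₂ b₃ : V) (P₁ : G.Walk a₁ b₁) (P₂ : G.Walk a₂ b₂) (P₃ : G.Walk a₃ b₃),
    G.Adj a₁ a₂ ∧ G.Adj a₁ a₃ ∧ G.Adj a₂ a₃ ∧
    G.Adj b₁ b₂ ∧ G.Adj b₁ b₃ ∧ G.Adj b₂ b₃ ∧
    P₁.IsPath ∧ P₂.IsPath ∧ P₃.IsPath ∧
    1 ≤ P₁.length ∧ 1 ≤ P₂.length ∧ 1 ≤ P₃.length ∧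
    (2 ≤ P₁.length ∨ 2 ≤ P₂.length ∨ 2 ≤ P₃.length) ∧
    (∀ v : V, v ∈ P₁.support → v ∈ P₂.support → False) ∧
    (∀ v : V, v ∈ P₁.support → v ∈ P₃.support → False) ∧
    (∀ v : V, v ∈ P₂.support → v ∈ P₃.support → False) ∧
    (∀ v : V, v ∈ P₁.support ∨ v ∈ P₂.support ∨ v ∈ P₃.support) ∧
    (∀ u v : V, G.Adj u v ↔
      s(u, v) ∈ P₁.edges ∨ s(u, v) ∈ P₂.edges ∨ s(u, v) ∈ P₃.edges ∨
      s(u, v) = s(a₁, a₂) ∨ s(u, v) = s(a₁, a₃) ∨ s(u, v) = s(a₂, a₃) ∨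
      s(u, v) = s(b₁, b₂) ∨ s(u, v) = s(b₁, b₃) ∨ s(u, v) = s(b₂, b₃))

/-- `G` is a wheel: a hole (chordless cycle of length at least four) together with one
additional vertex having at least three neighbors on the hole. -/
def IsWheel (G : SimpleGraph V) : Prop :=
  ∃ (v x : V) (c : G.Walk x x),
    c.IsCycle ∧ 4 ≤ c.length ∧ v ∉ c.support ∧
    (∀ u : V, u = v ∨ u ∈ c.support) ∧
    (∀ u w : V, u ∈ c.support → w ∈ c.support → G.Adj u w → s(u, w) ∈ c.edges) ∧
    3 ≤ {u : V | u ∈ c.support ∧ G.Adj v u}.ncard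

/-- `G` is a broken wheel: a wheel in which the neighbors of the additional vertex induce a
disconnected subgraph of the hole. -/
def IsBrokenWheel (G : SimpleGraph V) : Prop :=
  ∃ (v x : V) (c : G.Walk x x),
    c.IsCycle ∧ 4 ≤ c.length ∧ v ∉ c.support ∧
    (∀ u : V, u = v ∨ u ∈ c.support) ∧
    (∀ u w : V, u ∈ c.support → w ∈ c.support → G.Adj u w → s(u, w) ∈ c.edges) ∧
    3 ≤ {u : V | u ∈ c.support ∧ G.Adj v u}.ncard ∧
    ¬ (G.induce {u : V | u ∈ c.support ∧ G.Adj v u}).Connected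

/-- `G` is diamond-free: it has no induced subgraph isomorphic to `K₄` minus an edge. -/
def DiamondFree (G : SimpleGraph V) : Prop :=
  ¬ ∃ a b c d : V, c ≠ d ∧ G.Adj a b ∧ G.Adj a c ∧ G.Adj a d ∧ G.Adj b c ∧ G.Adj b d ∧
    ¬ G.Adj c d

/-- The short `n`-prism: two `n`-vertex cliques joined by a perfect matching. -/
def completePrism (n : ℕ) : SimpleGraph (Fin n ⊕ Fin n) :=
  SimpleGraph.fromRel (fun x y =>
    match x, y with
    | Sum.inl _, Sum.inl _ => True
    | Sum.inr _, Sum.inr _ => True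
    | Sum.inl i, Sum.inr j => i = j
    | Sum.inr i, Sum.inl j => i = j)

/-- `G` is a complete prism, i.e. a short `n`-prism for some `n ≥ 3`. -/
def IsCompletePrism (G : SimpleGraph V) : Prop :=
  ∃ n : ℕ, 3 ≤ n ∧ Nonempty (G ≃g completePrism n)

/-- `G` is a cycle. -/
def IsCycleGraph (G : SimpleGraph V) : Prop :=
  ∃ n : ℕ, 3 ≤ n ∧ Nonempty (G ≃g cycleGraph n)

/-- `G` is a complete graph. -/
def IsCompleteGraph (G : SimpleGraph V) : Prop :=
  ∀ u v : V, u ≠ v → G.Adj u v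

/-- `G` has a clique-cutset. -/
def HasCliqueCutset (G : SimpleGraph V) : Prop :=
  ∃ K : Set V, G.IsClique K ∧ IsCutset G K




section StatementZeroHelpers

section Helpers
variable {G : SimpleGraph V}

lemma connAvoid_refl (G : SimpleGraph V) {S : Set V} {a : V} (ha : a ∉ S) : ConnAvoid G S a a :=
  ⟨Walk.nil, by simp [ha]⟩

lemma connAvoid_symm {S : Set V} {a b : V} :
    ConnAvoid G S a b → ConnAvoid G S b a := by
  rintro ⟨p, hp⟩; exact ⟨p.reverse, fun v hv => hp v (by simpa using hv)⟩

lemma connAvoid_trans {S : Set V} {a b c : V} :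
    ConnAvoid G S a b → ConnAvoid G S b c → ConnAvoid G S a c := by
  rintro ⟨p, hp⟩ ⟨q, hq⟩
  refine ⟨p.append q, fun v hv => ?_⟩
  rcases (Walk.mem_support_append_iff _ _).1 hv with h | h
  · exact hp v h
  · exact hq v h

lemma connAvoid_adj {S : Set V} {a b : V} (h : G.Adj a b)
    (ha : a ∉ S) (hb : b ∉ S) : ConnAvoid G S a b :=
  ⟨h.toWalk, by simp [ha, hb]⟩

lemma walk_proj {s : Set V} {a b : ↥s} (p : (G.induce s).Walk a b) :
    ∃ q : G.Walk a.val b.val, ∀ v ∈ q.support, ∃ u ∈ p.support, (u : ↥s).val = v := by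
  induction p with
  | nil => exact ⟨Walk.nil, by simp⟩
  | @cons a c b h q ih =>
    obtain ⟨q', hq'⟩ := ih
    refine ⟨Walk.cons h q', fun v hv => ?_⟩
    rcases List.mem_cons.1 ((Walk.support_cons _ _) ▸ hv) with hv | hv
    · exact ⟨a, by simp, hv.symm⟩
    · obtain ⟨u, hu, hval⟩ := hq' v hv
      exact ⟨u, by simp [hu], hval⟩

lemma walk_lift {s : Set V} :
    ∀ {a b : V} (p : G.Walk a b) (_ : ∀ v ∈ p.support, v ∈ s) (ha : a ∈ s) (hb : b ∈ s),
      ∃ q : (G.induce s).Walk ⟨a, ha⟩ ⟨b, hb⟩, ∀ u ∈ q.support, (u : ↥s).val ∈ p.support := by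
  intro a b p
  induction p with
  | nil => intro _ ha hb; exact ⟨Walk.nil, by simp⟩
  | @cons a c b h q ih =>
    intro hs ha hb
    have hc : c ∈ s := hs c (by simp)
    obtain ⟨q', hq'⟩ := ih (fun v hv => hs v (by simp [hv])) hc hb
    refine ⟨Walk.cons (by exact h) q', fun u hu => ?_⟩
    rcases List.mem_cons.1 ((Walk.support_cons _ _) ▸ hu) with hu | hu
    · simp [hu]
    · have := hq' u hu
      simp [this]

lemma walk_enter {S : Set V} :
    ∀ {a b : V} (p : G.Walk a b), a ∉ S → (∃ u ∈ p.support, u ∈ S) →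
      ∃ x y, ConnAvoid G S a x ∧ G.Adj x y ∧ y ∈ S ∧ y ∈ p.support := by
  intro a b p
  induction p with
  | nil =>
    rintro ha ⟨u, hu, huS⟩
    simp only [Walk.support_nil, List.mem_singleton] at hu
    exact absurd (hu ▸ huS) ha
  | @cons a c b h q ih =>
    intro ha hex
    by_cases hc : c ∈ S
    · exact ⟨a, c, connAvoid_refl G ha, h, hc, by simp⟩
    · have hex' : ∃ u ∈ q.support, u ∈ S := by
        obtain ⟨u, hu, huS⟩ := hex
        rcases List.mem_cons.1 ((Walk.support_cons _ _) ▸ hu) with rfl | hu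
        · exact absurd huS ha
        · exact ⟨u, hu, huS⟩
      obtain ⟨x, y, hcx, hxy, hyS, hyq⟩ := ih hc hex'
      exact ⟨x, y, connAvoid_trans (connAvoid_adj h ha hc) hcx, hxy, hyS, by simp [hyq]⟩

lemma connAvoid_of_mem_support {S : Set V} :
    ∀ {a b : V} (p : G.Walk a b), (∀ v ∈ p.support, v ∉ S) →
      ∀ u ∈ p.support, ConnAvoid G S a u := by
  intro a b p
  induction p with
  | nil =>
    intro h u hu
    simp only [Walk.support_nil, List.mem_singleton] at hu
    subst hu; exact connAvoid_refl _ (h _ (by simp))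
  | @cons a c b h q ih =>
    intro hall u hu
    rcases List.mem_cons.1 ((Walk.support_cons _ _) ▸ hu) with rfl | hu
    · exact connAvoid_refl _ (hall _ (by simp))
    · have ha : a ∉ S := hall _ (by simp)
      have hc : c ∉ S := hall _ (by simp)
      exact connAvoid_trans (connAvoid_adj h ha hc)
        (ih (fun v hv => hall v (by simp [hv])) u hu)

lemma minsep_connAvoid_erase {S : Set V} {a b v : V}
    (h : IsMinSep G a b S) (hv : v ∈ S) : ConnAvoid G (S \ {v}) a b := by
  obtain ⟨⟨haS, hbS, _⟩, hmin⟩ := h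
  have hss : S \ {v} ⊂ S := Set.sdiff_singleton_ssubset.2 hv
  have := hmin _ hss
  by_contra hni
  exact this ⟨fun h => haS h.1, fun h => hbS h.1, hni⟩

lemma minsep_neighbor {S : Set V} {a b v : V}
    (h : IsMinSep G a b S) (hv : v ∈ S) : ∃ x, ConnAvoid G S a x ∧ G.Adj x v := by
  obtain ⟨p, hp⟩ := minsep_connAvoid_erase h hv
  have haS : a ∉ S := h.1.1
  have hex : ∃ u ∈ p.support, u ∈ S := by
    by_contra hno
    push_neg at hno
    exact h.1.2.2 ⟨p, hno⟩
  obtain ⟨x, y, hax, hxy, hyS, hyp⟩ := walk_enter p haS hex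
  have : y = v := by
    have := hp y hyp
    simp only [Set.mem_diff, Set.mem_singleton_iff, not_and, not_not] at this
    exact this hyS
  exact ⟨x, hax, this ▸ hxy⟩

lemma isMinSep_symm {S : Set V} {a b : V} (h : IsMinSep G a b S) : IsMinSep G b a S := by
  obtain ⟨⟨ha, hb, hc⟩, hmin⟩ := h
  exact ⟨⟨hb, ha, fun hca => hc (connAvoid_symm hca)⟩,
    fun T hT ⟨h1, h2, h3⟩ => hmin T hT ⟨h2, h1, fun hca => h3 (connAvoid_symm hca)⟩⟩

end Helpers

section IsoTransfer
variable {G : SimpleGraph V} {H : SimpleGraph W}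

lemma connAvoid_iso_fwd (e : G ≃g H) {S : Set V} {a b : V} :
    ConnAvoid G S a b → ConnAvoid H (⇑e '' S) (e a) (e b) := by
  rintro ⟨p, hp⟩
  refine ⟨p.map e.toHom, fun v hv => ?_⟩
  rw [Walk.support_map, List.mem_map] at hv
  obtain ⟨u, hu, rfl⟩ := hv
  rintro ⟨w, hwS, hw⟩
  have : w = u := e.toEquiv.injective hw
  exact hp u hu (this ▸ hwS)

lemma connAvoid_iso (e : G ≃g H) {S : Set V} {a b : V} :
    ConnAvoid G S a b ↔ ConnAvoid H (⇑e '' S) (e a) (e b) := by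
  constructor
  · exact connAvoid_iso_fwd e
  · intro h
    have := connAvoid_iso_fwd e.symm h
    simpa [Set.image_image, Equiv.symm_apply_apply] using this

lemma mem_image_iso (e : G ≃g H) {S : Set V} {a : V} : e a ∈ ⇑e '' S ↔ a ∈ S := by
  constructor
  · rintro ⟨w, hw, hwe⟩; rwa [← e.toEquiv.injective hwe]
  · intro h; exact ⟨a, h, rfl⟩

lemma image_ssubset_inj {α β : Type} {f : α → β} (hf : Function.Injective f)
    {A B : Set α} (h : A ⊂ B) : f '' A ⊂ f '' B :=
  ((hf.injOn).image_ssubset_image_iff (Set.subset_univ _) (Set.subset_univ _)).2 h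

lemma isSep_iso (e : G ≃g H) {S : Set V} {a b : V} :
    IsSep G a b S ↔ IsSep H (e a) (e b) (⇑e '' S) := by
  unfold IsSep
  rw [mem_image_iso e, mem_image_iso e, connAvoid_iso e]

lemma isMinSep_iso (e : G ≃g H) {S : Set V} {a b : V} :
    IsMinSep G a b S → IsMinSep H (e a) (e b) (⇑e '' S) := by
  rintro ⟨hsep, hmin⟩
  refine ⟨(isSep_iso e).1 hsep, fun T hT hTsep => ?_⟩
  have hT' : ⇑e.symm '' T ⊂ S := by
    have : ⇑e.symm '' T ⊂ ⇑e.symm '' (⇑e '' S) :=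
      image_ssubset_inj e.toEquiv.symm.injective hT
    simpa [Set.image_image] using this
  refine hmin _ hT' ?_
  have := (isSep_iso e.symm).1 hTsep
  simpa [Set.image_image] using this

lemma isMinimalSeparator_iso (e : G ≃g H) {S : Set V} :
    IsMinimalSeparator G S → IsMinimalSeparator H (⇑e '' S) := by
  rintro ⟨a, b, hab, hadj, hmin⟩
  exact ⟨e a, e b, fun h => hab (e.toEquiv.injective h),
    fun h => hadj (e.map_rel_iff.1 h), isMinSep_iso e hmin⟩

lemma isCutset_iso (e : G ≃g H) {S : Set V} :
    IsCutset G S → IsCutset H (⇑e '' S) := by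
  rintro ⟨a, b, ha, hb, hcon⟩
  refine ⟨e a, e b, (mem_image_iso e).not.2 ha, (mem_image_iso e).not.2 hb, ?_⟩
  rw [← connAvoid_iso e]; exact hcon

lemma isMinimalCutset_iso (e : G ≃g H) {S : Set V} :
    IsMinimalCutset G S → IsMinimalCutset H (⇑e '' S) := by
  rintro ⟨hc, hmin⟩
  refine ⟨isCutset_iso e hc, fun T hT hTc => ?_⟩
  have hT' : ⇑e.symm '' T ⊂ S := by
    have : ⇑e.symm '' T ⊂ ⇑e.symm '' (⇑e '' S) :=
      image_ssubset_inj e.toEquiv.symm.injective hT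
    simpa [Set.image_image] using this
  refine hmin _ hT' ?_
  have := isCutset_iso e.symm hTc
  simpa [Set.image_image] using this

end IsoTransfer

/-- The canonical isomorphism `(G[s])[T] ≃g G[val '' T]`. -/
noncomputable def isoInduceInduce (G : SimpleGraph V) (s : Set V) (T : Set ↥s) :
    (G.induce s).induce T ≃g G.induce (Subtype.val '' T) where
  toEquiv := Equiv.Set.image Subtype.val T Subtype.coe_injective
  map_rel_iff' := by intro x y; rfl

noncomputable def isoOfEq (G : SimpleGraph V) {A B : Set V} (h : A = B) :
    G.induce A ≃g G.induce B := by subst h; rfl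

lemma transferC {C : GraphClass} (hC : Hereditary C) {α β : Type} [Finite α] [Finite β]
    {G : SimpleGraph α} {H : SimpleGraph β} (e : H ≃g G) (h : C α G) : C β H :=
  hC α G β H Set.univ ⟨e.trans (induceUnivIso G).symm⟩ h

lemma exists_minimal_set {α : Type} [Finite α] (P : Set α → Prop) :
    ∀ (T : Set α), P T → ∃ S, S ⊆ T ∧ P S ∧ ∀ U, U ⊂ S → ¬ P U := by
  have key : ∀ (n : ℕ) (T : Set α), T.ncard = n → P T →
      ∃ S, S ⊆ T ∧ P S ∧ ∀ U, U ⊂ S → ¬ P U := by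
    intro n
    induction n using Nat.strong_induction_on with
    | _ n ih =>
      intro T hn hT
      by_cases h : ∀ U, U ⊂ T → ¬ P U
      · exact ⟨T, subset_rfl, hT, h⟩
      · push_neg at h
        obtain ⟨U, hU, hPU⟩ := h
        obtain ⟨S, hS1, hS2, hS3⟩ :=
          ih U.ncard (hn ▸ Set.ncard_lt_ncard hU T.toFinite) U rfl hPU
        exact ⟨S, hS1.trans hU.subset, hS2, hS3⟩
  intro T hT
  exact key T.ncard T rfl hT

/-- A minimal separator of an induced subgraph extends to a minimal separator
of the whole graph meeting the inducing set exactly in it. -/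
lemma extend_min_sep {V : Type} [Finite V] (G : SimpleGraph V) (s : Set V) (S : Set ↥s)
    (h : IsMinimalSeparator (G.induce s) S) :
    ∃ S' : Set V, IsMinimalSeparator G S' ∧ S' ∩ s = Subtype.val '' S := by
  obtain ⟨a, b, hab, hadj, hms⟩ := h
  obtain ⟨⟨haS, hbS, hcon⟩, hmin⟩ := hms
  have haT : a.val ∉ Subtype.val '' S ∪ sᶜ := by
    rintro (⟨u, huS, hu⟩ | hh)
    · exact haS (Subtype.coe_injective hu ▸ huS)
    · exact hh a.property
  have hbT : b.val ∉ Subtype.val '' S ∪ sᶜ := by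
    rintro (⟨u, huS, hu⟩ | hh)
    · exact hbS (Subtype.coe_injective hu ▸ huS)
    · exact hh b.property
  have hTsep : IsSep G a.val b.val (Subtype.val '' S ∪ sᶜ) := by
    refine ⟨haT, hbT, ?_⟩
    rintro ⟨p, hp⟩
    have hsupp : ∀ v ∈ p.support, v ∈ s := fun v hv =>
      by_contra fun hh => hp v hv (Or.inr hh)
    obtain ⟨q, hq⟩ := walk_lift p hsupp a.property b.property
    exact hcon ⟨q, fun u hu huS => hp u.val (hq u hu) (Or.inl ⟨u, huS, rfl⟩)⟩
  obtain ⟨S', hS'T, hS'sep, hS'min⟩ :=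
    exists_minimal_set (IsSep G a.val b.val) _ hTsep
  have hsub : Subtype.val '' S ⊆ S' := by
    rintro _ ⟨v, hvS, rfl⟩
    by_contra hvS'
    obtain ⟨q, hq⟩ := minsep_connAvoid_erase ⟨⟨haS, hbS, hcon⟩, hmin⟩ hvS
    obtain ⟨p, hp⟩ := walk_proj q
    refine hS'sep.2.2 ⟨p, fun w hw hwS' => ?_⟩
    obtain ⟨u, hu, rfl⟩ := hp w hw
    have huS : u ∉ S \ {v} := hq u hu
    rcases hS'T hwS' with ⟨x, hxS, hx⟩ | hcomp
    · have hxu : x = u := Subtype.coe_injective hx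
      subst hxu
      have : x = v := by
        simp only [Set.mem_diff, Set.mem_singleton_iff, not_and, not_not] at huS
        exact huS hxS
      subst this
      exact hvS' hwS'
    · exact hcomp u.property
  refine ⟨S', ⟨a.val, b.val, fun hh => hab (Subtype.coe_injective hh),
    fun hh => hadj hh, hS'sep, fun U hU => hS'min U hU⟩, ?_⟩
  apply Set.Subset.antisymm
  · rintro w ⟨hwS', hws⟩
    rcases hS'T hwS' with hh | hh
    · exact hh
    · exact absurd hws hh
  · rintro w ⟨u, hu, rfl⟩
    exact ⟨hsub ⟨u, hu, rfl⟩, u.property⟩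

/-- A minimal separator is a minimal cutset of a suitable induced subgraph. -/
lemma core_cutset {α : Type} [Finite α] (H : SimpleGraph α) (S : Set α)
    (h : IsMinimalSeparator H S) :
    ∃ Wst : Set α, S ⊆ Wst ∧ IsMinimalCutset (H.induce Wst) {x : ↥Wst | x.val ∈ S} := by
  obtain ⟨a, b, hab, hadj, hms⟩ := h
  obtain ⟨⟨haS, hbS, hcon⟩, hmin⟩ := hms
  set A : Set α := {x | ConnAvoid H S a x} with hA
  set B : Set α := {x | ConnAvoid H S b x} with hB
  have haA : a ∈ A := connAvoid_refl H haS
  have hbB : b ∈ B := connAvoid_refl H hbS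
  have hAS : ∀ x ∈ A, x ∉ S := by
    rintro x ⟨p, hp⟩; exact hp x p.end_mem_support
  have hBS : ∀ x ∈ B, x ∉ S := by
    rintro x ⟨p, hp⟩; exact hp x p.end_mem_support
  have hnbrA : ∀ v ∈ S, ∃ x ∈ A, H.Adj x v := fun v hv => by
    obtain ⟨x, hax, hadjv⟩ := minsep_neighbor ⟨⟨haS, hbS, hcon⟩, hmin⟩ hv
    exact ⟨x, hax, hadjv⟩
  have hnbrB : ∀ v ∈ S, ∃ x ∈ B, H.Adj x v := fun v hv => by
    obtain ⟨x, hbx, hadjv⟩ := minsep_neighbor (isMinSep_symm ⟨⟨haS, hbS, hcon⟩, hmin⟩) hv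
    exact ⟨x, hbx, hadjv⟩
  set Wst : Set α := A ∪ B ∪ S with hW
  have hSW : S ⊆ Wst := fun x hx => Or.inr hx
  have hAW : A ⊆ Wst := fun x hx => Or.inl (Or.inl hx)
  have hBW : B ⊆ Wst := fun x hx => Or.inl (Or.inr hx)
  set a' : ↥Wst := ⟨a, hAW haA⟩ with ha'
  set b' : ↥Wst := ⟨b, hBW hbB⟩ with hb'
  have hconnA : ∀ (z : ↥Wst), z.val ∈ A → ∀ (T : Set ↥Wst), (∀ x ∈ T, (x : ↥Wst).val ∈ S) →
      ConnAvoid (H.induce Wst) T a' z := by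
    rintro z hz T hTS
    obtain ⟨p, hp⟩ := hz
    have hsup : ∀ v ∈ p.support, v ∈ Wst := fun v hv =>
      hAW (connAvoid_of_mem_support p hp v hv)
    obtain ⟨q, hq⟩ := walk_lift p hsup (hAW haA) z.property
    exact ⟨q, fun u hu huT => hp u.val (hq u hu) (hTS u huT)⟩
  have hconnB : ∀ (z : ↥Wst), z.val ∈ B → ∀ (T : Set ↥Wst), (∀ x ∈ T, (x : ↥Wst).val ∈ S) →
      ConnAvoid (H.induce Wst) T b' z := by
    rintro z hz T hTS
    obtain ⟨p, hp⟩ := hz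
    have hsup : ∀ v ∈ p.support, v ∈ Wst := fun v hv =>
      hBW (connAvoid_of_mem_support p hp v hv)
    obtain ⟨q, hq⟩ := walk_lift p hsup (hBW hbB) z.property
    exact ⟨q, fun u hu huT => hp u.val (hq u hu) (hTS u huT)⟩
  have hconnSa : ∀ (z : ↥Wst), z.val ∈ S → ∀ (T : Set ↥Wst), (∀ x ∈ T, (x : ↥Wst).val ∈ S) →
      z ∉ T → ConnAvoid (H.induce Wst) T a' z := by
    intro z hz T hTS hzT
    obtain ⟨x, hxA, hxadj⟩ := hnbrA z.val hz
    have h1 : ConnAvoid (H.induce Wst) T a' ⟨x, hAW hxA⟩ := hconnA _ hxA T hTS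
    refine connAvoid_trans h1 (connAvoid_adj (by exact hxadj) ?_ hzT)
    intro hxT
    exact hAS x hxA (hTS _ hxT)
  have hconnSb : ∀ (z : ↥Wst), z.val ∈ S → ∀ (T : Set ↥Wst), (∀ x ∈ T, (x : ↥Wst).val ∈ S) →
      z ∉ T → ConnAvoid (H.induce Wst) T b' z := by
    intro z hz T hTS hzT
    obtain ⟨x, hxB, hxadj⟩ := hnbrB z.val hz
    have h1 : ConnAvoid (H.induce Wst) T b' ⟨x, hBW hxB⟩ := hconnB _ hxB T hTS
    refine connAvoid_trans h1 (connAvoid_adj (by exact hxadj) ?_ hzT)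
    intro hxT
    exact hBS x hxB (hTS _ hxT)
  refine ⟨Wst, hSW, ⟨⟨a', b', hAS a haA, hBS b hbB, ?_⟩, ?_⟩⟩
  · rintro ⟨q, hq⟩
    obtain ⟨p, hp⟩ := walk_proj q
    refine hcon ⟨p, fun v hv hvS => ?_⟩
    obtain ⟨u, hu, rfl⟩ := hp v hv
    exact hq u hu hvS
  · rintro T hT ⟨x, y, hxT, hyT, hxy⟩
    have hTS : ∀ x ∈ T, (x : ↥Wst).val ∈ S := fun x hx => hT.subset hx
    obtain ⟨v₀, hv₀K, hv₀T⟩ := Set.exists_of_ssubset hT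
    have hbridge : ConnAvoid (H.induce Wst) T b' a' :=
      connAvoid_trans (hconnSb v₀ hv₀K T hTS hv₀T)
        (connAvoid_symm (hconnSa v₀ hv₀K T hTS hv₀T))
    have claim : ∀ z : ↥Wst, z ∉ T → ConnAvoid (H.induce Wst) T z a' := by
      intro z hzT
      rcases z.property with (hz | hz) | hz
      · exact connAvoid_symm (hconnA z hz T hTS)
      · exact connAvoid_trans (connAvoid_symm (hconnB z hz T hTS)) hbridge
      · exact connAvoid_symm (hconnSa z hz T hTS hzT)
    exact hxy (connAvoid_trans (claim x hxT) (connAvoid_symm (claim y hyT)))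

end StatementZeroHelpers

/-- Proposition: equivalent characterizations of `𝒢_C`.
For a hereditary class `C` and a graph `G`, the following are equivalent:
(a) `G ∈ 𝒢_C`; (b) for every induced subgraph `H` of `G`, every minimal separator `S`
of `H` satisfies `H[S] ∈ C`; (c) for every induced subgraph `H` of `G`, every minimal
cutset `K` of `H` satisfies `H[K] ∈ C`. -/
theorem statement_0 (C : GraphClass) (hC : Hereditary C)
    (V : Type) [Finite V] (G : SimpleGraph V) :
    (MemGC C G ↔
        ∀ (s : Set V) (S : Set ↥s), IsMinimalSeparator (G.induce s) S →
          C ↥S ((G.induce s).induce S)) ∧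
    ((∀ (s : Set V) (S : Set ↥s), IsMinimalSeparator (G.induce s) S →
          C ↥S ((G.induce s).induce S)) ↔
        ∀ (s : Set V) (K : Set ↥s), IsMinimalCutset (G.induce s) K →
          C ↥K ((G.induce s).induce K)) := by
  constructor
  · constructor
    · -- (a) → (b)
      intro hG s S hS
      obtain ⟨S', hS'ms, hint⟩ := extend_min_sep G s S hS
      have hsub : Subtype.val '' S ⊆ S' := by
        rw [← hint]; exact Set.inter_subset_left
      have hC1 : C ↥S' (G.induce S') := hG S' hS'ms
      have hval : Subtype.val '' {x : ↥S' | x.val ∈ s} = Subtype.val '' S := by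
        rw [← hint]; ext w
        constructor
        · rintro ⟨x, hx, rfl⟩; exact ⟨x.property, hx⟩
        · rintro ⟨h1, h2⟩; exact ⟨⟨w, h1⟩, h2, rfl⟩
      have e : (G.induce s).induce S ≃g (G.induce S').induce {x : ↥S' | x.val ∈ s} :=
        ((isoInduceInduce G s S).trans (isoOfEq G hval.symm)).trans
          (isoInduceInduce G S' _).symm
      exact hC ↥S' (G.induce S') ↥S ((G.induce s).induce S) _ ⟨e⟩ hC1
    · -- (b) → (a)
      intro hb S hS
      have h1 : IsMinimalSeparator (G.induce Set.univ) (⇑(induceUnivIso G).symm '' S) :=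
        isMinimalSeparator_iso (induceUnivIso G).symm hS
      have h2 := hb Set.univ _ h1
      have hvals : Subtype.val '' (⇑(induceUnivIso G).symm '' S) = S := by
        ext w; constructor
        · rintro ⟨x, ⟨v, hv, rfl⟩, rfl⟩
          simpa using hv
        · intro hw; exact ⟨(induceUnivIso G).symm w, ⟨w, hw, rfl⟩, by simp⟩
      have e : G.induce S ≃g (G.induce Set.univ).induce (⇑(induceUnivIso G).symm '' S) :=
        (isoOfEq G hvals.symm).trans (isoInduceInduce G Set.univ _).symm
      exact transferC hC e h2
  · constructor
    · -- (b) → (c)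
      intro hb s K hK
      obtain ⟨⟨a, b, haK, hbK, hcon⟩, hmin⟩ := hK
      have hab : a ≠ b := by rintro rfl; exact hcon (connAvoid_refl _ haK)
      have hadj : ¬ (G.induce s).Adj a b := fun h => hcon (connAvoid_adj h haK hbK)
      exact hb s K ⟨a, b, hab, hadj, ⟨haK, hbK, hcon⟩,
        fun T hT hTs => hmin T hT ⟨a, b, hTs.1, hTs.2.1, hTs.2.2⟩⟩
    · -- (c) → (b)
      intro hc s S hS
      obtain ⟨Wst, hSW, hcut⟩ := core_cutset (G.induce s) S hS
      have h2 : IsMinimalCutset (G.induce (Subtype.val '' Wst))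
          (⇑(isoInduceInduce G s Wst) '' {x : ↥Wst | x.val ∈ S}) :=
        isMinimalCutset_iso (isoInduceInduce G s Wst) hcut
      have h3 := hc (Subtype.val '' Wst) _ h2
      have hv1 : Subtype.val '' (⇑(isoInduceInduce G s Wst) '' {x : ↥Wst | x.val ∈ S})
          = Subtype.val '' S := by
        ext w; constructor
        · rintro ⟨y, ⟨x, hxS, rfl⟩, rfl⟩
          exact ⟨x.val, hxS, rfl⟩
        · rintro ⟨u, huS, rfl⟩
          exact ⟨(isoInduceInduce G s Wst) ⟨u, hSW huS⟩, ⟨⟨u, hSW huS⟩, huS, rfl⟩, rfl⟩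
      have e : (G.induce s).induce S ≃g
          (G.induce (Subtype.val '' Wst)).induce
            (⇑(isoInduceInduce G s Wst) '' {x : ↥Wst | x.val ∈ S}) :=
        ((isoInduceInduce G s S).trans (isoOfEq G hv1.symm)).trans
          (isoInduceInduce G (Subtype.val '' Wst) _).symm
      exact transferC hC e h3


end PaperSep
end

section
/- Let C be a hereditary class of graphs that contains all complete graphs. Let G be a graph with a clique-cutset K and an associated cut-partition (A,B,K) of G. If both induced subgraphs G[A ∪ K] and G[B ∪ K] belong to G_C, then G belongs to G_C. Consequently, G_C is closed under gluing along a clique. -/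
open SimpleGraph

namespace PaperSep

variable {V : Type} {W : Type}

/-! ### Auxiliary lemmas for `statement_2` -/

section Aux

variable {G : SimpleGraph V} {S : Set V} {a b c v : V}

lemma ConnAvoid.rfl (h : a ∉ S) : ConnAvoid G S a a := ⟨Walk.nil, by simp [h]⟩

lemma ConnAvoid.symm (h : ConnAvoid G S a b) : ConnAvoid G S b a := by
  obtain ⟨p, hp⟩ := h; exact ⟨p.reverse, by simpa using hp⟩

lemma ConnAvoid.trans (h : ConnAvoid G S a b) (h' : ConnAvoid G S b c) :
    ConnAvoid G S a c := by
  obtain ⟨p, hp⟩ := h; obtain ⟨q, hq⟩ := h'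
  refine ⟨p.append q, fun v hv => ?_⟩
  rcases (Walk.mem_support_append_iff p q).mp hv with h | h
  · exact hp v h
  · exact hq v h

lemma ConnAvoid.step (h : G.Adj a b) (ha : a ∉ S) (hb : b ∉ S) : ConnAvoid G S a b :=
  ⟨h.toWalk, by simp [Walk.support_cons, ha, hb]⟩

lemma ConnAvoid.left_not_mem (h : ConnAvoid G S a b) : a ∉ S := by
  obtain ⟨p, hp⟩ := h; exact hp a p.start_mem_support

lemma ConnAvoid.right_not_mem (h : ConnAvoid G S a b) : b ∉ S := by
  obtain ⟨p, hp⟩ := h; exact hp b p.end_mem_support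

lemma ConnAvoid.mono {T : Set V} (h : ConnAvoid G S a b) (hTS : T ⊆ S) :
    ConnAvoid G T a b := by
  obtain ⟨p, hp⟩ := h; exact ⟨p, fun v hv hvT => hp v hv (hTS hvT)⟩

lemma IsMinSep.symm' (h : IsMinSep G a b S) : IsMinSep G b a S := by
  obtain ⟨⟨ha, hb, hc⟩, hmin⟩ := h
  exact ⟨⟨hb, ha, fun hcc => hc hcc.symm⟩,
    fun T hT hsep => hmin T hT ⟨hsep.2.1, hsep.1, fun hcc => hsep.2.2 hcc.symm⟩⟩

lemma exists_nbr_aux (hv : v ∈ S) :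
    ∀ {x y : V} (p : G.Walk x y), (∀ w ∈ p.support, w ∉ S \ {v}) → v ∈ p.support →
      x ∉ S → ∃ u, G.Adj u v ∧ ConnAvoid G S x u := by
  intro x y p
  induction p with
  | nil =>
    intro _ hmem2 hx
    simp only [Walk.support_nil, List.mem_singleton] at hmem2
    exact absurd (hmem2 ▸ hv) hx
  | @cons x z y h q ih =>
    intro havoid hmem hx
    have hq : ∀ w ∈ q.support, w ∉ S \ {v} := fun w hw => havoid w (by simp [hw])
    have hvq : v ∈ q.support := by
      rcases (by simpa using hmem : v = x ∨ v ∈ q.support) with h1 | h1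
      · exact absurd (h1 ▸ hv) hx
      · exact h1
    by_cases hzv : z = v
    · exact ⟨x, hzv ▸ h, Walk.nil, by simp [hx]⟩
    · have hz : z ∉ S := fun hzS => hq z q.start_mem_support ⟨hzS, hzv⟩
      obtain ⟨u, hu, ⟨r, hr⟩⟩ := ih hq hvq hz
      refine ⟨u, hu, Walk.cons h r, fun w hw => ?_⟩
      rcases (by simpa using hw : w = x ∨ w ∈ r.support) with h1 | h1
      · exact h1 ▸ hx
      · exact hr w h1

/-- Every vertex of a minimal `(a,b)`-separator has a neighbor in the component of `a`. -/
lemma exists_nbr (hmin : IsMinSep G a b S) (hv : v ∈ S) :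
    ∃ u, G.Adj u v ∧ ConnAvoid G S a u := by
  have hss : S \ {v} ⊂ S := Set.sdiff_singleton_ssubset.mpr hv
  have hnot := hmin.2 _ hss
  have ha : a ∉ S := hmin.1.1
  have hb : b ∉ S := hmin.1.2.1
  have hconn : ConnAvoid G (S \ {v}) a b := by
    by_contra hcc
    exact hnot ⟨fun h => ha h.1, fun h => hb h.1, hcc⟩
  obtain ⟨p, hp⟩ := hconn
  have hvp : v ∈ p.support := by
    by_contra hvp
    refine hmin.1.2.2 ⟨p, fun w hw hwS => ?_⟩
    exact hp w hw ⟨hwS, fun h => hvp (h ▸ hw)⟩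
  exact exists_nbr_aux hv p hp hvp ha

lemma firstExit {A : Set V} :
    ∀ {z y : V} (p : G.Walk z y), z ∈ A → y ∉ A →
      ∃ (w u : V) (r : G.Walk w y), u ∈ A ∧ G.Adj u w ∧ w ∉ A ∧
        r.length < p.length ∧ ∀ x ∈ r.support, x ∈ p.support := by
  intro z y p
  induction p with
  | nil => intro hz hy; exact absurd hz hy
  | @cons z z₂ y h q ih =>
    intro hz hy
    by_cases hz₂ : z₂ ∈ A
    · obtain ⟨w, u, r, h1, h2, h3, h4, h5⟩ := ih hz₂ hy
      exact ⟨w, u, r, h1, h2, h3, by simp [Walk.length_cons]; omega,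
        fun x hx => by simp [Walk.support_cons]; right; exact h5 x hx⟩
    · exact ⟨z₂, z, q, hz, h, hz₂, by simp [Walk.length_cons],
        fun x hx => by simp [Walk.support_cons]; right; exact hx⟩

lemma connAvoid_of_induce {T : Set V} :
    ∀ {u v : ↥T}, ConnAvoid (G.induce T) (Subtype.val ⁻¹' S) u v →
      ConnAvoid G S u.val v.val := by
  have key : ∀ {u v : ↥T} (p : (G.induce T).Walk u v),
      ∃ q : G.Walk u.val v.val, ∀ x ∈ q.support, ∃ hx : x ∈ T, (⟨x, hx⟩ : ↥T) ∈ p.support := by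
    intro u v p
    induction p with
    | nil => exact ⟨Walk.nil, by simp⟩
    | @cons u w v h q ih =>
      obtain ⟨q', hq'⟩ := ih
      refine ⟨Walk.cons h q', fun x hx => ?_⟩
      rcases (by exact List.mem_cons.mp hx : x = u.val ∨ x ∈ q'.support) with h1 | h1
      · exact ⟨h1 ▸ u.2, by simp [h1]⟩
      · obtain ⟨hx2, hx3⟩ := hq' x h1
        exact ⟨hx2, by simp [hx3]⟩
  rintro u v ⟨p, hp⟩
  obtain ⟨q, hq⟩ := key p
  refine ⟨q, fun x hx hxS => ?_⟩
  obtain ⟨hx2, hx3⟩ := hq x hx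
  exact hp _ hx3 hxS

/-- Key rerouting lemma: a walk of `G` avoiding `S` with endpoints in `B ∪ K` can be
rerouted inside `B ∪ K` (shortcutting excursions through `A` via the clique `K`). -/
lemma toInduce {A B K : Set V} (hcover : A ∪ B ∪ K = Set.univ)
    (hanti : ∀ a ∈ A, ∀ b ∈ B, ¬ G.Adj a b)
    (hAB : Disjoint A B) (hAK : Disjoint A K) (hclique : G.IsClique K) :
    ∀ (n : ℕ) {x y : V} (p : G.Walk x y), p.length ≤ n →
      (∀ v ∈ p.support, v ∉ S) → ∀ (hx : x ∈ B ∪ K) (hy : y ∈ B ∪ K),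
      ConnAvoid (G.induce (B ∪ K)) (Subtype.val ⁻¹' S) ⟨x, hx⟩ ⟨y, hy⟩ := by
  have hout : ∀ {z : V}, z ∉ B ∪ K → z ∈ A := by
    intro z hz
    have : z ∈ A ∪ B ∪ K := hcover ▸ Set.mem_univ z
    rcases this with (h | h) | h
    · exact h
    · exact absurd (Or.inl h) hz
    · exact absurd (Or.inr h) hz
  have hnotA : ∀ {z : V}, z ∈ B ∪ K → z ∉ A := by
    intro z hz hzA
    rcases hz with h | h
    · exact hAB.ne_of_mem hzA h rfl
    · exact hAK.ne_of_mem hzA h rfl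
  intro n
  induction n with
  | zero =>
    intro x y p hlen hav hx hy
    cases p with
    | nil => exact ConnAvoid.rfl (by simpa using hav x (by simp))
    | cons h q => simp [Walk.length_cons] at hlen
  | succ n ih =>
    intro x y p hlen hav hx hy
    cases p with
    | nil => exact ConnAvoid.rfl (by simpa using hav x (by simp))
    | @cons _ z _ h q =>
      have hxS : x ∉ S := hav x (by simp)
      have hq : ∀ v ∈ q.support, v ∉ S := fun v hv => hav v (by simp [hv])
      have hqlen : q.length ≤ n := by simp [Walk.length_cons] at hlen; omega
      by_cases hz : z ∈ B ∪ K
      · have hzS : z ∉ S := hq z q.start_mem_support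
        exact ConnAvoid.trans
          (ConnAvoid.step (by exact h) (by simpa using hxS) (by simpa using hzS))
          (ih q hqlen hq hz hy)
      · have hzA : z ∈ A := hout hz
        have hxK : x ∈ K := by
          rcases hx with hB | hK
          · exact absurd h.symm (hanti z hzA x hB)
          · exact hK
        obtain ⟨w, u, r, huA, hadj, hwA, hrlen, hrsub⟩ := firstExit q hzA (hnotA hy)
        have hwBK : w ∈ B ∪ K := by
          have : w ∈ A ∪ B ∪ K := hcover ▸ Set.mem_univ w
          rcases this with (h1 | h1) | h1
          · exact absurd h1 hwA
          · exact absurd hadj (hanti u huA w h1)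
          · exact Or.inr h1
        have hr : ∀ v ∈ r.support, v ∉ S := fun v hv => hq v (hrsub v hv)
        have hc := ih r (by omega) hr hwBK hy
        by_cases hxw : x = w
        · have : (⟨x, hx⟩ : ↥(B ∪ K)) = ⟨w, hwBK⟩ := Subtype.ext hxw
          rw [this]; exact hc
        · have hwK : w ∈ K := by
            rcases hwBK with h1 | h1
            · exact absurd hadj (hanti u huA w h1)
            · exact h1
          have hwS : w ∉ S := hr w r.start_mem_support
          exact ConnAvoid.trans
            (ConnAvoid.step (by exact hclique hxK hwK hxw) (by simpa using hxS)
              (by simpa using hwS)) hc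

lemma induce_induce_iso {T : Set V} (S : Set V) (hST : S ⊆ T) :
    Nonempty ((G.induce S) ≃g ((G.induce T).induce (Subtype.val ⁻¹' S)).induce Set.univ) :=
  ⟨⟨⟨fun v => ⟨⟨⟨v.1, hST v.2⟩, v.2⟩, Set.mem_univ _⟩, fun x => ⟨x.1.1.1, x.1.2⟩,
    fun _ => rfl, fun _ => rfl⟩, Iff.rfl⟩⟩

lemma complete_iso (h : G.IsClique S) :
    Nonempty ((G.induce S) ≃g ((⊤ : SimpleGraph ↥S).induce Set.univ)) := by
  refine ⟨⟨⟨fun v => ⟨v, Set.mem_univ _⟩, fun x => x.1, fun _ => rfl, fun _ => rfl⟩, ?_⟩⟩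
  intro u v
  show u ≠ v ↔ G.Adj u.val v.val
  constructor
  · intro hne
    exact h u.2 v.2 fun he => hne (Subtype.ext he)
  · intro hadj he
    exact hadj.ne (congrArg Subtype.val he)

lemma aux2 (C : GraphClass) (hC : Hereditary C)
    [Finite V] {A B K : Set V}
    (hcover : A ∪ B ∪ K = Set.univ)
    (hanti : ∀ a ∈ A, ∀ b ∈ B, ¬ G.Adj a b)
    (hAB : Disjoint A B) (hAK : Disjoint A K)
    (hclique : G.IsClique K)
    (hGB : MemGC C (G.induce (B ∪ K)))
    (hmin : IsMinSep G a b S)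
    (hCb : ∀ x, ConnAvoid G S b x → x ∈ B)
    (hSK : ¬ S ⊆ K) :
    C ↥S (G.induce S) := by
  have ha : a ∉ S := hmin.1.1
  have hb : b ∉ S := hmin.1.2.1
  have hnc : ¬ ConnAvoid G S a b := hmin.1.2.2
  have hbB : b ∈ B := hCb b (ConnAvoid.rfl hb)
  have huniv : ∀ z : V, z ∈ A ∨ z ∈ B ∪ K := by
    intro z
    have : z ∈ A ∪ B ∪ K := hcover ▸ Set.mem_univ z
    rcases this with (h | h) | h
    exacts [Or.inl h, Or.inr (Or.inl h), Or.inr (Or.inr h)]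
  have hST : S ⊆ B ∪ K := by
    intro v hv
    obtain ⟨u, hadj, hconn⟩ := exists_nbr hmin.symm' hv
    have huB : u ∈ B := hCb u hconn
    rcases huniv v with h | h
    · exact absurd hadj.symm (hanti v h u huB)
    · exact h
  obtain ⟨v₀, hv₀S, hv₀K⟩ := Set.not_subset.mp hSK
  have hv₀B : v₀ ∈ B := by
    rcases hST hv₀S with h | h
    · exact h
    · exact absurd h hv₀K
  obtain ⟨a₀, hadj₀, hconn₀⟩ := exists_nbr hmin hv₀S
  have ha₀S : a₀ ∉ S := hconn₀.right_not_mem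
  have ha₀T : a₀ ∈ B ∪ K := by
    rcases huniv a₀ with h | h
    · exact absurd hadj₀ (hanti a₀ h v₀ hv₀B)
    · exact h
  have hbT : b ∈ B ∪ K := Or.inl hbB
  set S' : Set ↥(B ∪ K) := Subtype.val ⁻¹' S with hS'
  have toInd : ∀ {x y : V} (hx : x ∈ B ∪ K) (hy : y ∈ B ∪ K), ConnAvoid G S x y →
      ConnAvoid (G.induce (B ∪ K)) S' ⟨x, hx⟩ ⟨y, hy⟩ := by
    rintro x y hx hy ⟨p, hp⟩
    exact toInduce hcover hanti hAB hAK hclique p.length p le_rfl hp hx hy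
  have ha₀A : a₀ ∉ A := by
    intro h
    rcases ha₀T with h1 | h1
    · exact hAB.ne_of_mem h h1 rfl
    · exact hAK.ne_of_mem h h1 rfl
  have ca : ∀ v ∈ S, ∃ u, ∃ hu : u ∈ B ∪ K, G.Adj u v ∧ u ∉ S ∧
      ConnAvoid (G.induce (B ∪ K)) S' ⟨u, hu⟩ ⟨a₀, ha₀T⟩ := by
    intro v hv
    obtain ⟨u₁, hadj₁, hconn₁⟩ := exists_nbr hmin hv
    have hu₁S : u₁ ∉ S := hconn₁.right_not_mem
    rcases huniv u₁ with hu₁A | hu₁T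
    · obtain ⟨p, hp⟩ := hconn₁.symm.trans hconn₀
      obtain ⟨w, u', r, hu'A, hadj', hwA, _, hrsub⟩ := firstExit p hu₁A ha₀A
      have hwT : w ∈ B ∪ K := by
        rcases huniv w with h | h
        · exact absurd h hwA
        · exact h
      have hwK : w ∈ K := by
        rcases hwT with h | h
        · exact absurd hadj' (hanti u' hu'A w h)
        · exact h
      have hwS : w ∉ S := fun h => hp w (hrsub w r.start_mem_support) h
      have hvK : v ∈ K := by
        rcases hST hv with h | h
        · exact absurd hadj₁ (hanti u₁ hu₁A v h)
        · exact h
      have hvw : w ≠ v := fun h => hwS (h ▸ hv)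
      exact ⟨w, hwT, hclique hwK hvK hvw, hwS,
        toInd hwT ha₀T ⟨r, fun x hx => hp x (hrsub x hx)⟩⟩
    · exact ⟨u₁, hu₁T, hadj₁, hu₁S, toInd hu₁T ha₀T (hconn₁.symm.trans hconn₀)⟩
  have cb : ∀ v ∈ S, ∃ u, ∃ hu : u ∈ B ∪ K, G.Adj u v ∧ u ∉ S ∧
      ConnAvoid (G.induce (B ∪ K)) S' ⟨u, hu⟩ ⟨b, hbT⟩ := by
    intro v hv
    obtain ⟨u, hadj, hconn⟩ := exists_nbr hmin.symm' hv
    have huB : u ∈ B := hCb u hconn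
    exact ⟨u, Or.inl huB, hadj, hconn.right_not_mem, toInd (Or.inl huB) hbT hconn.symm⟩
  have ha₀b : a₀ ≠ b := fun h => hnc (h ▸ hconn₀)
  have hnadj' : ¬ G.Adj a₀ b := fun h => hnc (hconn₀.trans (ConnAvoid.step h ha₀S hb))
  have hsep' : IsMinimalSeparator (G.induce (B ∪ K)) S' := by
    refine ⟨⟨a₀, ha₀T⟩, ⟨b, hbT⟩, fun h => ha₀b (congrArg Subtype.val h),
      fun h => hnadj' h, ⟨⟨?_, ?_, ?_⟩, ?_⟩⟩
    · simpa [hS'] using ha₀S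
    · simpa [hS'] using hb
    · intro hcc
      exact hnc (hconn₀.trans (connAvoid_of_induce hcc))
    · rintro T' hT' ⟨hT1, hT2, hT3⟩
      obtain ⟨v, hvS', hvT'⟩ := Set.exists_of_ssubset hT'
      obtain ⟨ua, hua, hadja, huaS, hca⟩ := ca v.val hvS'
      obtain ⟨ub, hub, hadjb, hubS, hcb2⟩ := cb v.val hvS'
      have hsub : T' ⊆ S' := hT'.subset
      refine hT3 ?_
      have c1 : ConnAvoid (G.induce (B ∪ K)) T' ⟨a₀, ha₀T⟩ ⟨ua, hua⟩ :=
        (hca.mono hsub).symm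
      have c2 : ConnAvoid (G.induce (B ∪ K)) T' ⟨ua, hua⟩ v :=
        ConnAvoid.step (by exact hadja) (fun h => huaS (hsub h)) hvT'
      have c3 : ConnAvoid (G.induce (B ∪ K)) T' v ⟨ub, hub⟩ :=
        ConnAvoid.step (by exact hadjb.symm) hvT' (fun h => hubS (hsub h))
      have c4 : ConnAvoid (G.induce (B ∪ K)) T' ⟨ub, hub⟩ ⟨b, hbT⟩ := hcb2.mono hsub
      exact c1.trans (c2.trans (c3.trans c4))
  exact hC _ _ _ _ Set.univ (induce_induce_iso S hST) (hGB S' hsep')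

lemma aux1 (C : GraphClass) (hC : Hereditary C) [Finite V] {A B K : Set V}
    (hcover : A ∪ B ∪ K = Set.univ)
    (hanti : ∀ a ∈ A, ∀ b ∈ B, ¬ G.Adj a b)
    (hAB : Disjoint A B) (hAK : Disjoint A K) (hBK : Disjoint B K)
    (hclique : G.IsClique K)
    (hGA : MemGC C (G.induce (A ∪ K))) (hGB : MemGC C (G.induce (B ∪ K)))
    (hmin : IsMinSep G a b S)
    (hside : ∀ k ∈ K, k ∉ S → ¬ ConnAvoid G S b k)
    (hSK : ¬ S ⊆ K) :
    C ↥S (G.induce S) := by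
  have hb : b ∉ S := hmin.1.2.1
  have hbK : b ∉ K := fun h => hside b h hb (ConnAvoid.rfl hb)
  have walkside : ∀ {y z : V} (p : G.Walk y z), (∀ v ∈ p.support, v ∉ S) →
      ConnAvoid G S b y → ((y ∈ A → z ∈ A) ∧ (y ∈ B → z ∈ B)) := by
    intro y z p
    induction p with
    | nil => exact fun _ _ => ⟨id, id⟩
    | @cons y w z h q ih =>
      intro hav hcb
      have hyS : y ∉ S := hav y (by simp)
      have hwS : w ∉ S := hav w (by simp)
      have hq : ∀ v ∈ q.support, v ∉ S := fun v hv => hav v (by simp [hv])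
      have hcw : ConnAvoid G S b w := hcb.trans (ConnAvoid.step h hyS hwS)
      have hwK : w ∉ K := fun hk => hside w hk hwS hcw
      have hwAB : w ∈ A ∨ w ∈ B := by
        have : w ∈ A ∪ B ∪ K := hcover ▸ Set.mem_univ w
        rcases this with (h1 | h1) | h1
        exacts [Or.inl h1, Or.inr h1, absurd h1 hwK]
      constructor
      · intro hyA
        have hwA : w ∈ A := by
          rcases hwAB with h1 | h1
          · exact h1
          · exact absurd h (hanti y hyA w h1)
        exact (ih hq hcw).1 hwA
      · intro hyB
        have hwB : w ∈ B := by
          rcases hwAB with h1 | h1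
          · exact absurd h.symm (hanti w h1 y hyB)
          · exact h1
        exact (ih hq hcw).2 hwB
  have hbAB : b ∈ A ∨ b ∈ B := by
    have : b ∈ A ∪ B ∪ K := hcover ▸ Set.mem_univ b
    rcases this with (h1 | h1) | h1
    exacts [Or.inl h1, Or.inr h1, absurd h1 hbK]
  rcases hbAB with hbA | hbB
  · have hcover' : B ∪ A ∪ K = Set.univ := by
      rw [Set.union_comm B A]; exact hcover
    have hanti' : ∀ x ∈ B, ∀ y ∈ A, ¬ G.Adj x y :=
      fun x hx y hy hadj => hanti y hy x hx hadj.symm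
    have hCb : ∀ x, ConnAvoid G S b x → x ∈ A := by
      rintro x ⟨p, hp⟩
      exact (walkside p hp (ConnAvoid.rfl hb)).1 hbA
    exact aux2 C hC hcover' hanti' hAB.symm hBK hclique hGA hmin hCb hSK
  · have hCb : ∀ x, ConnAvoid G S b x → x ∈ B := by
      rintro x ⟨p, hp⟩
      exact (walkside p hp (ConnAvoid.rfl hb)).2 hbB
    exact aux2 C hC hcover hanti hAB hAK hclique hGB hmin hCb hSK

end Aux

/-- if `C` is hereditary and contains all complete graphs, then `𝒢_C` is
closed under gluing along a clique: if `(A, B, K)` is a cut-partition of `G` with `K` a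
clique, and `G[A ∪ K], G[B ∪ K] ∈ 𝒢_C`, then `G ∈ 𝒢_C`. -/
theorem statement_2 (C : GraphClass) (hC : Hereditary C)
    (hcomplete : ∀ (α : Type) [Finite α], C α (⊤ : SimpleGraph α))
    (V : Type) [Finite V] (G : SimpleGraph V) (A B K : Set V)
    (hA : A.Nonempty) (hB : B.Nonempty)
    (hAB : Disjoint A B) (hAK : Disjoint A K) (hBK : Disjoint B K)
    (hcover : A ∪ B ∪ K = Set.univ)
    (hanti : ∀ a ∈ A, ∀ b ∈ B, ¬ G.Adj a b)
    (hclique : G.IsClique K)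
    (hGA : MemGC C (G.induce (A ∪ K))) (hGB : MemGC C (G.induce (B ∪ K))) :
    MemGC C G := by
  intro S hS
  obtain ⟨a, b, hab, hnadj, hmin⟩ := hS
  by_cases hSK : S ⊆ K
  · exact hC _ (⊤ : SimpleGraph ↥S) _ _ Set.univ (complete_iso (hclique.subset hSK))
      (hcomplete ↥S)
  · have hnc : ¬ ConnAvoid G S a b := hmin.1.2.2
    have hdi : (∀ k ∈ K, k ∉ S → ¬ ConnAvoid G S b k) ∨
        (∀ k ∈ K, k ∉ S → ¬ ConnAvoid G S a k) := by
      by_contra hcon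
      push_neg at hcon
      obtain ⟨⟨k₁, hk₁K, hk₁S, hc₁⟩, ⟨k₂, hk₂K, hk₂S, hc₂⟩⟩ := hcon
      refine hnc (hc₂.trans (ConnAvoid.trans ?_ hc₁.symm))
      by_cases h : k₂ = k₁
      · rw [h]; exact ConnAvoid.rfl hk₁S
      · exact ConnAvoid.step (hclique hk₂K hk₁K h) hk₂S hk₁S
    rcases hdi with hside | hside
    · exact aux1 C hC hcover hanti hAB hAK hBK hclique hGA hGB hmin hside hSK
    · exact aux1 C hC hcover hanti hAB hAK hBK hclique hGA hGB hmin.symm' hside hSK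

end PaperSep
end
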